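/- Let G be a non-abelian group of affine symmetries of ℝⁿ (maps x ↦ εx + a, ε ∈ {±1}). Then every orbit of G is minimal: for every x ∈ ℝⁿ and every y in the closure of G(x), the closure of G(y) equals the closure of G(x). -/

import Mathlib

theorem stmt_15 {n : ℕ} (G : Subgroup (Equiv.Perm (Fin n → ℝ)))
    (hG : ∀ f ∈ G, ∃ ε : ℝ, (ε = 1 ∨ ε = -1) ∧ ∃ a : Fin n → ℝ, ∀ x, f x = ε • x + a)
    (hna : ∃ f ∈ G, ∃ g ∈ G, f * g ≠ g * f) :
    ∀ x : Fin n → ℝ, ∀ y ∈ closure {z | ∃ g ∈ G, g x = z},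
      closure {z | ∃ g ∈ G, g y = z} = closure {z | ∃ g ∈ G, g x = z} := by
  have hiso : ∀ f ∈ G, Isometry (f : Equiv.Perm (Fin n → ℝ)) := by
    intro f hf
    obtain ⟨ε, hε, a, hfa⟩ := hG f hf
    apply Isometry.of_dist_eq
    intro u v
    rw [hfa, hfa, dist_eq_norm]
    have h1 : ε • u + a - (ε • v + a) = ε • (u - v) := by module
    rw [h1, norm_smul, dist_eq_norm]
    rcases hε with h | h <;> simp [h]
  have key : ∀ w : Fin n → ℝ, ∀ v ∈ closure {z | ∃ g ∈ G, g w = z},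
      closure {z | ∃ g ∈ G, g v = z} ⊆ closure {z | ∃ g ∈ G, g w = z} := by
    intro w v hv
    apply closure_minimal _ isClosed_closure
    rintro _ ⟨g, hg, rfl⟩
    have hsub : g '' {z | ∃ h ∈ G, h w = z} ⊆ {z | ∃ h ∈ G, h w = z} := by
      rintro _ ⟨_, ⟨h, hh, rfl⟩, rfl⟩
      exact ⟨g * h, mul_mem hg hh, rfl⟩
    have : g v ∈ g '' closure {z | ∃ h ∈ G, h w = z} := ⟨v, hv, rfl⟩
    exact closure_mono hsub
      (image_closure_subset_closure_image (hiso g hg).continuous this)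
  intro x y hy
  apply Set.Subset.antisymm (key x y hy)
  apply key y x
  rw [Metric.mem_closure_iff]
  intro ε hε
  rw [Metric.mem_closure_iff] at hy
  obtain ⟨b, ⟨g, hg, rfl⟩, hb⟩ := hy ε hε
  refine ⟨(g⁻¹ : Equiv.Perm (Fin n → ℝ)) y, ⟨g⁻¹, inv_mem hg, rfl⟩, ?_⟩
  have := (hiso g hg).dist_eq x ((g⁻¹ : Equiv.Perm (Fin n → ℝ)) y)
  rw [← this, show g (g⁻¹ y) = y from Equiv.apply_symm_apply g y]
  exact dist_comm y (g x) ▸ hb
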